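/- arXiv:2007.16139 — 2 statements merged into one kernel-verified Lean document; each statement's English description precedes it below -/
import Mathlib

section
/- Let Λ < 0, M > 0, Q ≠ 0, P(r) = -Λr⁴ + r² - 2Mr + Q², s the unique root of P', and z > 0 the positive root of T(r) = 3Λr⁴ - r² + Q². Then P has exactly two simple real roots if and only if P'(z) < 0, which is equivalent to M > z - 2Λz³; moreover both roots are positive when they exist. -/
/-- P' is strictly increasing. -/
lemma aux7_gmono (Λ M a b : ℝ) (hΛ : Λ < 0) (hab : a < b) :
    -4 * Λ * a ^ 3 + 2 * a - 2 * M < -4 * Λ * b ^ 3 + 2 * b - 2 * M := by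
  nlinarith [mul_nonneg (mul_nonneg (by linarith : (0:ℝ) ≤ -4 * Λ)
      (by linarith : (0:ℝ) ≤ b - a))
      (by nlinarith [sq_nonneg (a + b), sq_nonneg a, sq_nonneg b] :
        (0:ℝ) ≤ a ^ 2 + a * b + b ^ 2)]

/-- s is the strict global minimum of P (with quadratic gap). -/
lemma aux7_min (Λ M s r : ℝ) (hΛ : Λ < 0)
    (hgs : -4 * Λ * s ^ 3 + 2 * s - 2 * M = 0) :
    -Λ * s ^ 4 + s ^ 2 - 2 * M * s + (r - s) ^ 2 ≤ -Λ * r ^ 4 + r ^ 2 - 2 * M * r := by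
  nlinarith [mul_nonneg (by linarith : (0:ℝ) ≤ -Λ)
      (mul_nonneg (sq_nonneg (r - s))
        (by nlinarith [sq_nonneg (r + s), sq_nonneg s] :
          (0:ℝ) ≤ r ^ 2 + 2 * r * s + 3 * s ^ 2)),
    (by rw [hgs, mul_zero] : (r - s) * (-4 * Λ * s ^ 3 + 2 * s - 2 * M) = 0)]

/-- P strictly decreasing on (-∞, s]. -/
lemma aux7_anti (Λ M s a b : ℝ) (hΛ : Λ < 0)
    (hgs : -4 * Λ * s ^ 3 + 2 * s - 2 * M = 0) (hab : a < b) (hbs : b ≤ s) :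
    -Λ * b ^ 4 + b ^ 2 - 2 * M * b < -Λ * a ^ 4 + a ^ 2 - 2 * M * a := by
  have hf : a ^ 3 + a ^ 2 * b + a * b ^ 2 + b ^ 3 ≤ 4 * s ^ 3 := by
    nlinarith [mul_nonneg (by linarith : (0:ℝ) ≤ s - a)
        (by nlinarith [sq_nonneg (s + a), sq_nonneg (s + b), sq_nonneg (a + b)] :
          (0:ℝ) ≤ s ^ 2 + s * a + a ^ 2 + s * b + a * b + b ^ 2),
      mul_nonneg (by linarith : (0:ℝ) ≤ s - b)
        (by nlinarith [sq_nonneg (s + b), sq_nonneg s] :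
          (0:ℝ) ≤ 3 * s ^ 2 + 2 * s * b + b ^ 2)]
  nlinarith [mul_pos (by linarith : (0:ℝ) < b - a) (by linarith : (0:ℝ) < 2 * s - a - b),
    mul_nonneg (mul_nonneg (by linarith : (0:ℝ) ≤ -Λ) (by linarith : (0:ℝ) ≤ b - a))
      (by linarith : (0:ℝ) ≤ 4 * s ^ 3 - (a ^ 3 + a ^ 2 * b + a * b ^ 2 + b ^ 3)),
    (by rw [hgs, mul_zero] : (b - a) * (-4 * Λ * s ^ 3 + 2 * s - 2 * M) = 0)]

/-- P strictly increasing on [s, ∞) for s > 0. -/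
lemma aux7_mono (Λ M s a b : ℝ) (hΛ : Λ < 0) (hs : 0 < s)
    (hgs : -4 * Λ * s ^ 3 + 2 * s - 2 * M = 0) (hsa : s ≤ a) (hab : a < b) :
    -Λ * a ^ 4 + a ^ 2 - 2 * M * a < -Λ * b ^ 4 + b ^ 2 - 2 * M * b := by
  have ha3 : s ^ 3 ≤ a ^ 3 := pow_le_pow_left₀ hs.le hsa 3
  have hb3 : s ^ 3 ≤ b ^ 3 := pow_le_pow_left₀ hs.le (by linarith) 3
  have hf : 4 * s ^ 3 ≤ a ^ 3 + a ^ 2 * b + a * b ^ 2 + b ^ 3 := by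
    nlinarith [mul_pos hs (mul_pos hs hs), mul_pos (lt_of_lt_of_le hs hsa)
        (mul_pos (lt_of_lt_of_le hs hsa) (by linarith : (0:ℝ) < b))]
  nlinarith [mul_pos (by linarith : (0:ℝ) < b - a) (by linarith : (0:ℝ) < a + b - 2 * s),
    mul_nonneg (mul_nonneg (by linarith : (0:ℝ) ≤ -Λ) (by linarith : (0:ℝ) ≤ b - a))
      (by linarith : (0:ℝ) ≤ a ^ 3 + a ^ 2 * b + a * b ^ 2 + b ^ 3 - 4 * s ^ 3),
    (by rw [hgs, mul_zero] : (b - a) * (-4 * Λ * s ^ 3 + 2 * s - 2 * M) = 0)]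

/-- For `Λ < 0`, `M > 0`, `Q ≠ 0`: `P` has exactly two simple real roots iff `P'(z) < 0`
iff `M > z - 2Λz³`, where `z > 0` is the positive root of `T`; moreover any root of `P`
is positive. -/
theorem stmt_7 (Λ M Q z : ℝ) (hΛ : Λ < 0) (hM : 0 < M) (hQ : Q ≠ 0)
    (hz : 0 < z) (hzroot : 3 * Λ * z ^ 4 - z ^ 2 + Q ^ 2 = 0)
    (P : ℝ → ℝ) (hP : ∀ r, P r = -Λ * r ^ 4 + r ^ 2 - 2 * M * r + Q ^ 2) :
    ((∃ r₁ r₂ : ℝ, r₁ ≠ r₂ ∧ P r₁ = 0 ∧ P r₂ = 0 ∧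
        (-4 * Λ * r₁ ^ 3 + 2 * r₁ - 2 * M ≠ 0) ∧ (-4 * Λ * r₂ ^ 3 + 2 * r₂ - 2 * M ≠ 0) ∧
        ∀ r : ℝ, P r = 0 → r = r₁ ∨ r = r₂) ↔
      -4 * Λ * z ^ 3 + 2 * z - 2 * M < 0) ∧
    ((-4 * Λ * z ^ 3 + 2 * z - 2 * M < 0) ↔ M > z - 2 * Λ * z ^ 3) ∧
    (∀ r : ℝ, P r = 0 → 0 < r) := by
  have hΛ' : (0:ℝ) ≤ -Λ := by linarith
  have hQ2 : 0 < Q ^ 2 := (sq_nonneg Q).lt_of_ne' (pow_ne_zero 2 hQ)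
  -- positivity of roots
  have hpos : ∀ r : ℝ, P r = 0 → 0 < r := by
    intro r hr
    by_contra h
    push_neg at h
    rw [hP] at hr
    nlinarith [mul_nonneg hΛ' ((by positivity : (0:ℝ) ≤ r ^ 4)), sq_nonneg r, sq_nonneg (r ^ 2),
      mul_nonneg hM.le (neg_nonneg.2 h)]
  -- continuity of g := P'
  have hgc : Continuous fun r : ℝ => -4 * Λ * r ^ 3 + 2 * r - 2 * M := by fun_prop
  have hPc : Continuous P := by
    have : P = fun r => -Λ * r ^ 4 + r ^ 2 - 2 * M * r + Q ^ 2 := funext hP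
    rw [this]; fun_prop
  refine ⟨⟨?_, ?_⟩, ⟨fun h => by linarith, fun h => by linarith⟩, hpos⟩
  · -- forward
    rintro ⟨r₁, r₂, hne, h1, h2, hg1, hg2, huniq⟩
    by_contra hc
    push_neg at hc
    -- find critical point s ∈ [0, z]
    have hg0 : (fun r : ℝ => -4 * Λ * r ^ 3 + 2 * r - 2 * M) 0 < 0 := by
      simp; linarith
    have hmem : (0:ℝ) ∈ Set.Icc ((fun r : ℝ => -4 * Λ * r ^ 3 + 2 * r - 2 * M) 0)
        ((fun r : ℝ => -4 * Λ * r ^ 3 + 2 * r - 2 * M) z) := ⟨hg0.le, hc⟩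
    obtain ⟨s, hsmem, hgs⟩ := intermediate_value_Icc hz.le hgc.continuousOn hmem
    simp only at hgs
    -- P s ≥ 0
    have hTs : 0 ≤ 3 * Λ * s ^ 4 - s ^ 2 + Q ^ 2 := by
      have hs0 := hsmem.1
      have hsz := hsmem.2
      nlinarith [mul_nonneg (by nlinarith : (0:ℝ) ≤ z ^ 2 - s ^ 2)
        (by nlinarith [sq_nonneg s, sq_nonneg z, mul_nonneg (mul_nonneg hΛ' (sq_nonneg s)) (sq_nonneg z)] :
          (0:ℝ) ≤ 1 - 3 * Λ * (s ^ 2 + z ^ 2))]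
    have hPs : 0 ≤ P s := by
      rw [hP]
      nlinarith [hTs, (by rw [hgs, mul_zero] : s * (-4 * Λ * s ^ 3 + 2 * s - 2 * M) = 0)]
    -- r₁ = s and r₂ = s
    have key : ∀ r : ℝ, P r = 0 → r = s := by
      intro r hr
      have := aux7_min Λ M s r hΛ hgs
      rw [hP] at hr hPs
      have hsq : (r - s) ^ 2 ≤ 0 := by linarith
      have := sq_nonneg (r - s)
      have : (r - s) ^ 2 = 0 := le_antisymm hsq this
      have := pow_eq_zero_iff (n := 2) (by norm_num) |>.mp this
      linarith [this]
    exact hne ((key r₁ h1).trans (key r₂ h2).symm)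
  · -- backward
    intro hgz
    -- find critical point s > z
    set R : ℝ := max z M + 1 with hR
    have hzR : z < R := lt_of_le_of_lt (le_max_left _ _) (lt_add_one _)
    have hMR : M < R := lt_of_le_of_lt (le_max_right _ _) (lt_add_one _)
    have hR0 : 0 < R := hz.trans hzR
    have hgR : 0 < -4 * Λ * R ^ 3 + 2 * R - 2 * M := by
      nlinarith [mul_pos (by linarith : (0:ℝ) < -4 * Λ) (pow_pos hR0 3)]
    have hmem : (0:ℝ) ∈ Set.Icc ((fun r : ℝ => -4 * Λ * r ^ 3 + 2 * r - 2 * M) z)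
        ((fun r : ℝ => -4 * Λ * r ^ 3 + 2 * r - 2 * M) R) := ⟨hgz.le, hgR.le⟩
    obtain ⟨s, hsmem, hgs⟩ := intermediate_value_Icc hzR.le hgc.continuousOn hmem
    simp only at hgs
    have hzs : z < s := by
      rcases eq_or_lt_of_le hsmem.1 with h | h
      · exfalso; rw [← h] at hgs; linarith
      · exact h
    have hs0 : 0 < s := hz.trans hzs
    -- P s < 0
    have hPs : P s < 0 := by
      have hTs : 3 * Λ * s ^ 4 - s ^ 2 + Q ^ 2 < 0 := by
        nlinarith [mul_pos (by nlinarith : (0:ℝ) < s ^ 2 - z ^ 2)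
          (by nlinarith [sq_nonneg s, sq_nonneg z, mul_nonneg (mul_nonneg hΛ' (sq_nonneg s)) (sq_nonneg z)] :
            (0:ℝ) < 1 - 3 * Λ * (s ^ 2 + z ^ 2))]
      rw [hP]
      nlinarith [hTs, (by rw [hgs, mul_zero] : s * (-4 * Λ * s ^ 3 + 2 * s - 2 * M) = 0)]
    -- first root in (0, s)
    have hP0 : 0 < P 0 := by rw [hP]; simpa using hQ2
    obtain ⟨r₁, hr₁mem, hr₁⟩ := intermediate_value_Icc' hs0.le hPc.continuousOn
      (Set.mem_Icc.2 ⟨hPs.le, hP0.le⟩)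
    have hr₁s : r₁ < s := by
      rcases eq_or_lt_of_le hr₁mem.2 with h | h
      · exfalso; rw [h] at hr₁; linarith
      · exact h
    have hr₁0 : 0 < r₁ := hpos r₁ hr₁
    -- second root in (s, R₂)
    set R₂ : ℝ := max s (2 * M) + 1 with hR₂
    have hsR₂ : s < R₂ := lt_of_le_of_lt (le_max_left _ _) (lt_add_one _)
    have hMR₂ : 2 * M < R₂ := lt_of_le_of_lt (le_max_right _ _) (lt_add_one _)
    have hR₂0 : 0 < R₂ := hs0.trans hsR₂
    have hPR₂ : 0 < P R₂ := by
      rw [hP]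
      nlinarith [mul_nonneg hΛ' ((by positivity : (0:ℝ) ≤ R₂ ^ 4)),
        mul_pos hR₂0 (by linarith : (0:ℝ) < R₂ - 2 * M)]
    obtain ⟨r₂, hr₂mem, hr₂⟩ := intermediate_value_Icc hsR₂.le hPc.continuousOn
      (Set.mem_Icc.2 ⟨hPs.le, hPR₂.le⟩)
    have hsr₂ : s < r₂ := by
      rcases eq_or_lt_of_le hr₂mem.1 with h | h
      · exfalso; rw [← h] at hr₂; linarith
      · exact h
    refine ⟨r₁, r₂, by linarith, hr₁, hr₂, ?_, ?_, ?_⟩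
    · have := aux7_gmono Λ M r₁ s hΛ hr₁s
      rw [hgs] at this
      exact ne_of_lt this
    · have := aux7_gmono Λ M s r₂ hΛ hsr₂
      rw [hgs] at this
      exact (ne_of_lt this).symm
    · intro r hr
      rcases le_or_gt r s with h | h
      · left
        by_contra hne'
        rcases lt_or_gt_of_ne hne' with hlt | hgt
        · have := aux7_anti Λ M s r r₁ hΛ hgs hlt hr₁s.le
          rw [hP] at hr; rw [hP] at hr₁; linarith
        · have := aux7_anti Λ M s r₁ r hΛ hgs hgt h
          rw [hP] at hr; rw [hP] at hr₁; linarith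
      · right
        by_contra hne'
        rcases lt_or_gt_of_ne hne' with hlt | hgt
        · have := aux7_mono Λ M s r r₂ hΛ hs0 hgs h.le hlt
          rw [hP] at hr; rw [hP] at hr₂; linarith
        · have := aux7_mono Λ M s r₂ r hΛ hs0 hgs hsr₂.le hgt
          rw [hP] at hr; rw [hP] at hr₂; linarith
end

section
/- Let H be a Hilbert space, let U(t,s) be a family of unitary operators on H satisfying U(t₃,t₂)U(t₂,t₁) = U(t₃,t₁) and U(t,t) = Id, and let (H₀, dom) be a self-adjoint operator on H with unitary group e^{itH₀}. Suppose D ⊆ H is a dense subspace such that for every ψ ∈ D the map t ↦ U(0,t)e^{itH₀}ψ is differentiable with ‖d/dt (U(0,t)e^{itH₀}ψ)‖ ≤ C_ψ e^{-κt} for some κ > 0, C_ψ ≥ 0 and all t ≥ 0. Then the strong limit W = s-lim_{t→+∞} U(0,t)e^{itH₀} exists on all of H and W is an isometry. -/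
open Filter

private lemma exp_integral_bound (C κ a b : ℝ) (hκ : 0 < κ) (hC : 0 ≤ C) (hab : a ≤ b) :
    |∫ t in a..b, C * Real.exp (-κ * t)| ≤ C / κ * Real.exp (-κ * a) := by
  have hF : ∀ t : ℝ, HasDerivAt (fun t => -(C / κ) * Real.exp (-κ * t))
      (C * Real.exp (-κ * t)) t := by
    intro t
    have h0 : HasDerivAt (fun y : ℝ => -κ * y) (-κ) t := by
      simpa using (hasDerivAt_id t).const_mul (-κ)
    have h1 := (h0.exp).const_mul (-(C / κ))
    refine h1.congr_deriv ?_
    field_simp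
  have hint : IntervalIntegrable (fun t => C * Real.exp (-κ * t)) MeasureTheory.volume a b :=
    (continuous_const.mul (Real.continuous_exp.comp (continuous_const.mul continuous_id))).intervalIntegrable a b
  rw [intervalIntegral.integral_eq_sub_of_hasDerivAt (fun x _ => hF x) hint]
  have hexp_le : Real.exp (-κ * b) ≤ Real.exp (-κ * a) := by
    apply Real.exp_le_exp.2
    nlinarith
  have hCκ : 0 ≤ C / κ := div_nonneg hC hκ.le
  rw [abs_of_nonneg (by nlinarith [Real.exp_pos (-κ * b), Real.exp_pos (-κ * a)])]
  nlinarith [Real.exp_pos (-κ * b)]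

/-- Cook's method: if `t ↦ U(0,t) e^{itH₀} ψ` has an exponentially decaying derivative for
`ψ` in a dense set, then the wave operator `W = s-lim_{t→+∞} U(0,t) e^{itH₀}` exists on all
of `H` and is an isometry. -/
theorem stmt_9 {H : Type*} [NormedAddCommGroup H] [InnerProductSpace ℂ H] [CompleteSpace H]
    (U : ℝ → ℝ → (H ≃ₗᵢ[ℂ] H)) (V : ℝ → (H ≃ₗᵢ[ℂ] H))
    (hUchap : ∀ t₁ t₂ t₃ : ℝ, ∀ ψ : H, U t₃ t₂ (U t₂ t₁ ψ) = U t₃ t₁ ψ)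
    (hUid : ∀ t : ℝ, U t t = LinearIsometryEquiv.refl ℂ H)
    (hVgrp : ∀ s t : ℝ, ∀ ψ : H, V (s + t) ψ = V s (V t ψ))
    (hVid : V 0 = LinearIsometryEquiv.refl ℂ H)
    (D : Set H) (hD : Dense D)
    (hCook : ∀ ψ ∈ D, ∃ (g : ℝ → H) (C κ : ℝ), 0 < κ ∧ 0 ≤ C ∧
      (∀ t : ℝ, HasDerivAt (fun τ => U 0 τ (V τ ψ)) (g t) t) ∧
      (∀ t ≥ 0, ‖g t‖ ≤ C * Real.exp (-κ * t))) :
    ∃ W : H →L[ℂ] H,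
      (∀ ψ : H, Tendsto (fun t => U 0 t (V t ψ)) atTop (nhds (W ψ))) ∧
      (∀ ψ : H, ‖W ψ‖ = ‖ψ‖) := by
  set f : ℝ → H → H := fun t ψ => U 0 t (V t ψ) with hf
  -- Step 1: Cauchy for ψ ∈ D
  have keyD : ∀ ψ ∈ D, CauchySeq (fun t => f t ψ) := by
    intro ψ hψ
    obtain ⟨g, C, κ, hκ, hC, hderiv, hbound⟩ := hCook ψ hψ
    -- key estimate
    have hgm : MeasureTheory.AEStronglyMeasurable g
        (MeasureTheory.volume : MeasureTheory.Measure ℝ) := by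
      have : g = deriv (fun τ => f τ ψ) := funext fun t => ((hderiv t).deriv).symm
      rw [this]
      exact (stronglyMeasurable_deriv _).aestronglyMeasurable
    have est : ∀ a b : ℝ, 0 ≤ a → a ≤ b →
        dist (f b ψ) (f a ψ) ≤ C / κ * Real.exp (-κ * a) := by
      intro a b ha hab
      have hle : ∀ t ∈ Set.uIoc a b, ‖g t‖ ≤ C * Real.exp (-κ * t) := by
        intro t ht
        rw [Set.uIoc_of_le hab] at ht
        exact hbound t (le_trans ha ht.1.le)
      have hint : IntervalIntegrable (fun t => C * Real.exp (-κ * t))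
          MeasureTheory.volume a b :=
        (continuous_const.mul (Real.continuous_exp.comp (continuous_const.mul continuous_id))).intervalIntegrable a b
      have hgint : IntervalIntegrable g MeasureTheory.volume a b := by
        apply hint.mono_fun hgm.restrict
        refine (MeasureTheory.ae_restrict_iff' measurableSet_uIoc).2 ?_
        filter_upwards with t ht
        rw [Real.norm_eq_abs, abs_of_nonneg (mul_nonneg hC (Real.exp_pos _).le)]
        exact hle t ht
      have hsub : f b ψ - f a ψ = ∫ t in a..b, g t :=
        (intervalIntegral.integral_eq_sub_of_hasDerivAt (fun x _ => hderiv x) hgint).symm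
      rw [dist_eq_norm, hsub]
      calc ‖∫ t in a..b, g t‖ ≤ |∫ t in a..b, C * Real.exp (-κ * t)| := by
            apply intervalIntegral.norm_integral_le_abs_of_norm_le _ hint
            exact (MeasureTheory.ae_restrict_iff' measurableSet_uIoc).2
              (Filter.Eventually.of_forall hle)
        _ ≤ C / κ * Real.exp (-κ * a) := exp_integral_bound C κ a b hκ hC hab
    rw [Metric.cauchySeq_iff']
    intro ε hε
    have htend : Tendsto (fun a : ℝ => C / κ * Real.exp (-κ * a)) atTop (nhds 0) := by
      have : Tendsto (fun a : ℝ => Real.exp (-κ * a)) atTop (nhds 0) := by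
        apply Real.tendsto_exp_atBot.comp
        exact (tendsto_const_nhds.neg_mul_atTop (neg_neg_iff_pos.2 hκ)) tendsto_id
      simpa using this.const_mul (C / κ)
    have : ∀ᶠ a : ℝ in atTop, C / κ * Real.exp (-κ * a) < ε ∧ 0 ≤ a := by
      filter_upwards [htend.eventually (gt_mem_nhds hε), eventually_ge_atTop (0:ℝ)]
        with a h1 h2 using ⟨h1, h2⟩
    obtain ⟨N, hN1, hN2⟩ := this.exists
    exact ⟨N, fun n hn => lt_of_le_of_lt (est N n hN2 hn) hN1⟩
  -- Step 2: Cauchy for all ψ, hence convergence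
  have key : ∀ ψ : H, ∃ w : H, Tendsto (fun t => f t ψ) atTop (nhds w) := by
    intro ψ
    apply cauchySeq_tendsto_of_complete
    rw [Metric.cauchySeq_iff]
    intro ε hε
    obtain ⟨φ, hφD, hφ⟩ := hD.exists_dist_lt ψ (by linarith : (0:ℝ) < ε / 3)
    have hiso : ∀ t : ℝ, dist (f t ψ) (f t φ) = dist ψ φ := by
      intro t
      simp only [hf, dist_eq_norm]
      rw [← map_sub, ← map_sub, (U 0 t).norm_map, (V t).norm_map]
    obtain ⟨N, hN⟩ := Metric.cauchySeq_iff.1 (keyD φ hφD) (ε / 3) (by linarith)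
    refine ⟨N, fun m hm n hn => ?_⟩
    calc dist (f m ψ) (f n ψ)
        ≤ dist (f m ψ) (f m φ) + dist (f m φ) (f n φ) + dist (f n φ) (f n ψ) :=
          dist_triangle4 _ _ _ _
      _ < ε / 3 + ε / 3 + ε / 3 := by
          have h1 := hiso m; have h2 := hiso n
          rw [dist_comm (f n φ)] at *
          gcongr <;> [exact h1 ▸ hφ; exact hN m hm n hn; exact (hiso n) ▸ hφ]
      _ = ε := by ring
  choose w hw using key
  -- Step 3: w is linear and isometric
  have hadd : ∀ ψ φ : H, w (ψ + φ) = w ψ + w φ := by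
    intro ψ φ
    refine tendsto_nhds_unique (hw (ψ + φ)) ?_
    have : (fun t => f t (ψ + φ)) = fun t => f t ψ + f t φ := by
      funext t; simp [hf]
    rw [this]
    exact (hw ψ).add (hw φ)
  have hsmul : ∀ (c : ℂ) (ψ : H), w (c • ψ) = c • w ψ := by
    intro c ψ
    refine tendsto_nhds_unique (hw (c • ψ)) ?_
    have : (fun t => f t (c • ψ)) = fun t => c • f t ψ := by
      funext t; simp [hf]
    rw [this]
    exact (hw ψ).const_smul c
  have hnorm : ∀ ψ : H, ‖w ψ‖ = ‖ψ‖ := by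
    intro ψ
    have h1 : Tendsto (fun t => ‖f t ψ‖) atTop (nhds ‖w ψ‖) := (hw ψ).norm
    have h2 : (fun t => ‖f t ψ‖) = fun _ => ‖ψ‖ := by
      funext t; simp only [hf]; rw [(U 0 t).norm_map, (V t).norm_map]
    rw [h2] at h1
    exact (tendsto_const_nhds_iff.1 h1).symm
  refine ⟨LinearMap.mkContinuous
    { toFun := w, map_add' := hadd, map_smul' := hsmul } 1
    (fun ψ => by simp [hnorm ψ]), fun ψ => hw ψ, hnorm⟩
end
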